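/- For every oriented hyperplane H in ℝⁿ and every 1 ≤ p < ∞, the polarization P_H is L^p-contracting: for all measurable f, g with f − g ∈ L^p(ℝⁿ), ‖P_H f − P_H g‖_p ≤ ‖f − g‖_p. -/

import Mathlib

open MeasureTheory Set RealInnerProductSpace ENNReal

/-- The reflection of `x` in the hyperplane `u^⊥`. -/
noncomputable def reflH {n : ℕ} (u x : EuclideanSpace ℝ (Fin n)) :
    EuclideanSpace ℝ (Fin n) :=
  x - (2 * ⟪x, u⟫) • u

/-- The polarization of `f` with respect to the oriented hyperplane `u^⊥`. -/
noncomputable def polarization {n : ℕ} (u : EuclideanSpace ℝ (Fin n))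
    (f : EuclideanSpace ℝ (Fin n) → ℝ) (x : EuclideanSpace ℝ (Fin n)) : ℝ :=
  if 0 ≤ ⟪x, u⟫ then max (f x) (f (reflH u x)) else min (f x) (f (reflH u x))

lemma abs_add_abs_le_max (A B : ℝ) : |A| + |B| ≤ max |A + B| |A - B| := by
  rcases le_total 0 A with hA | hA <;> rcases le_total 0 B with hB | hB
  · apply le_max_of_le_left
    rw [abs_of_nonneg hA, abs_of_nonneg hB, abs_of_nonneg (by linarith)]
  · apply le_max_of_le_right
    rw [abs_of_nonneg hA, abs_of_nonpos hB]
    have := le_abs_self (A - B); linarith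
  · apply le_max_of_le_right
    rw [abs_of_nonpos hA, abs_of_nonneg hB]
    have := neg_abs_le (A - B); linarith
  · apply le_max_of_le_left
    rw [abs_of_nonpos hA, abs_of_nonpos hB]
    have := neg_abs_le (A + B); linarith

lemma key_ineqs {M m x y : ℝ} (h1 : M + m = x + y) (h2 : |M - m| ≤ |x - y|) :
    |M| + |m| ≤ |x| + |y| ∧ max |M| |m| ≤ max |x| |y| := by
  have hxy : |x - y| ≤ |x| + |y| := by
    have := abs_add_le x (-y); simpa [sub_eq_add_neg] using this
  constructor
  · calc |M| + |m| ≤ max |M + m| |M - m| := abs_add_abs_le_max M m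
      _ ≤ max |x + y| |x - y| := max_le_max (by rw [h1]) h2
      _ ≤ |x| + |y| := max_le (abs_add_le x y) hxy
  · have hM : 2 * |M| ≤ |x + y| + |x - y| := by
      have e : 2 * M = (x + y) + (M - m) := by linarith
      have : |2 * M| ≤ |x + y| + |M - m| := by rw [e]; exact abs_add_le _ _
      rw [abs_mul, abs_two] at this; linarith
    have hm : 2 * |m| ≤ |x + y| + |x - y| := by
      have e : 2 * m = (x + y) - (M - m) := by linarith
      have : |2 * m| ≤ |x + y| + |M - m| := by
        rw [e]; exact (abs_sub _ _)
      rw [abs_mul, abs_two] at this; linarith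
    have hmx : |x + y| + |x - y| ≤ 2 * max |x| |y| := by
      rcases max_cases |x| |y| with ⟨e, h⟩ | ⟨e, h⟩ <;> rw [e] <;>
        rcases abs_cases x with ⟨ex, sx⟩ | ⟨ex, sx⟩ <;>
        rcases abs_cases y with ⟨ey, sy⟩ | ⟨ey, sy⟩ <;>
        rcases abs_cases (x + y) with ⟨e1, s1⟩ | ⟨e1, s1⟩ <;>
        rcases abs_cases (x - y) with ⟨e2, s2⟩ | ⟨e2, s2⟩ <;> rw [e1, e2] <;> linarith
    exact max_le (by linarith) (by linarith)

lemma rpow_pair_sorted {p : ℝ} (hp : 1 ≤ p) {s t u v : ℝ} (ht : 0 ≤ t) (hts : t ≤ s)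
    (hv : 0 ≤ v) (hvu : v ≤ u) (h1 : s + t ≤ u + v) (h2 : s ≤ u) :
    s ^ p + t ^ p ≤ u ^ p + v ^ p := by
  have hp0 : (0:ℝ) ≤ p := by linarith
  have hs : 0 ≤ s := ht.trans hts
  rcases le_total t v with h | h
  · exact add_le_add (Real.rpow_le_rpow hs h2 hp0) (Real.rpow_le_rpow ht h hp0)
  · by_cases huv : u ≤ v
    · have hsu : s = u := le_antisymm h2 (by linarith)
      have htv : t = v := by linarith
      rw [hsu, htv]
    · push_neg at huv
      have hne : u - v ≠ 0 := sub_ne_zero.mpr (ne_of_gt huv)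
      set θ := (s - v) / (u - v) with hθdef
      have hθ0 : 0 ≤ θ := div_nonneg (by linarith) (by linarith)
      have hθ1 : θ ≤ 1 := (div_le_one (by linarith)).2 (by linarith)
      have hC := convexOn_rpow hp
      have humem : u ∈ Ici (0:ℝ) := mem_Ici.mpr (hv.trans hvu)
      have hvmem : v ∈ Ici (0:ℝ) := mem_Ici.mpr hv
      have hθmul : θ * (u - v) = s - v := by
        rw [hθdef]; exact div_mul_cancel₀ _ hne
      have e1 : θ * u + (1 - θ) * v = s := by linear_combination hθmul
      have hcvx : ∀ aa bb : ℝ, 0 ≤ aa → 0 ≤ bb → aa + bb = 1 →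
          (aa * u + bb * v) ^ p ≤ aa * u ^ p + bb * v ^ p := by
        intro aa bb ha hb hab
        have h := hC.2 humem hvmem ha hb hab
        simpa [smul_eq_mul] using h
      have c1 : s ^ p ≤ θ * u ^ p + (1 - θ) * v ^ p := by
        have h := hcvx θ (1 - θ) hθ0 (by linarith) (by ring)
        rwa [e1] at h
      have e2 : (1 - θ) * u + θ * v = u + v - s := by linear_combination -hθmul
      have c2 : t ^ p ≤ (1 - θ) * u ^ p + θ * v ^ p := by
        have ht' : t ≤ u + v - s := by linarith
        have step1 : t ^ p ≤ (u + v - s) ^ p := Real.rpow_le_rpow ht ht' hp0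
        have step2 := hcvx (1 - θ) θ (by linarith) hθ0 (by ring)
        rw [e2] at step2
        exact step1.trans step2
      have : θ * u ^ p + (1 - θ) * v ^ p + ((1 - θ) * u ^ p + θ * v ^ p)
          = u ^ p + v ^ p := by ring
      linarith
  
lemma rpow_pair {p : ℝ} (hp : 1 ≤ p) {s t u v : ℝ} (hs : 0 ≤ s) (ht : 0 ≤ t)
    (hu : 0 ≤ u) (hv : 0 ≤ v) (h1 : s + t ≤ u + v) (h2 : max s t ≤ max u v) :
    s ^ p + t ^ p ≤ u ^ p + v ^ p := by
  rcases le_total t s with hts | hts <;> rcases le_total v u with hvu | hvu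
  · exact rpow_pair_sorted hp ht hts hv hvu h1
      ((le_max_left s t).trans (h2.trans (max_le le_rfl hvu)))
  · have := rpow_pair_sorted hp ht hts hu hvu (by linarith)
      ((le_max_left s t).trans (h2.trans (max_le hvu le_rfl)))
    linarith
  · have := rpow_pair_sorted hp hs hts hv hvu (by linarith)
      ((le_max_right s t).trans (h2.trans (max_le le_rfl hvu)))
    linarith
  · have := rpow_pair_sorted hp hs hts hu hvu (by linarith)
      ((le_max_right s t).trans (h2.trans (max_le hvu le_rfl)))
    linarith

lemma pair_abs_rpow {p : ℝ} (hp : 1 ≤ p) (a b c d : ℝ) :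
    |max a b - max c d| ^ p + |min a b - min c d| ^ p ≤ |a - c| ^ p + |b - d| ^ p := by
  set M := max a b - max c d with hM
  set m := min a b - min c d with hm
  have hab : max a b + min a b = a + b := max_add_min a b
  have hcd : max c d + min c d = c + d := max_add_min c d
  have h1 : M + m = (a - c) + (b - d) := by rw [hM, hm]; linarith
  have h2 : |M - m| ≤ |(a - c) - (b - d)| := by
    have e : M - m = |b - a| - |d - c| := by
      rw [hM, hm]
      have h1' := max_sub_min_eq_abs a b
      have h2' := max_sub_min_eq_abs c d
      linarith
    rw [e]
    have h3 := abs_abs_sub_abs_le_abs_sub (b - a) (d - c)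
    rwa [show (b - a) - (d - c) = -((a - c) - (b - d)) by ring, abs_neg] at h3
  obtain ⟨hsum, hmax⟩ := key_ineqs h1 h2
  exact rpow_pair hp (abs_nonneg _) (abs_nonneg _) (abs_nonneg _) (abs_nonneg _) hsum hmax

variable {n : ℕ}

lemma inner_reflH (u : EuclideanSpace ℝ (Fin n)) (hu : ‖u‖ = 1)
    (x : EuclideanSpace ℝ (Fin n)) : ⟪reflH u x, u⟫ = -⟪x, u⟫ := by
  have huu : ⟪u, u⟫ = (1:ℝ) := by
    rw [real_inner_self_eq_norm_sq, hu]; norm_num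
  rw [reflH, inner_sub_left, real_inner_smul_left, huu]
  ring

lemma reflH_involutive (u : EuclideanSpace ℝ (Fin n)) (hu : ‖u‖ = 1)
    (x : EuclideanSpace ℝ (Fin n)) : reflH u (reflH u x) = x := by
  rw [reflH, inner_reflH u hu, reflH]
  module

lemma reflH_eq_reflection (u : EuclideanSpace ℝ (Fin n)) (hu : ‖u‖ = 1)
    (x : EuclideanSpace ℝ (Fin n)) :
    (Submodule.reflection ((ℝ ∙ u)ᗮ)) x = reflH u x := by
  rw [Submodule.reflection_orthogonal_apply, Submodule.reflection_singleton_apply]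
  rw [reflH, hu, real_inner_comm x u]
  push_cast
  module

lemma measurePreserving_reflH (u : EuclideanSpace ℝ (Fin n)) (hu : ‖u‖ = 1) :
    MeasurePreserving (reflH u) (volume : Measure (EuclideanSpace ℝ (Fin n))) volume := by
  have h := (Submodule.reflection ((ℝ ∙ u)ᗮ)).measurePreserving
  have : ⇑(Submodule.reflection ((ℝ ∙ u)ᗮ) : EuclideanSpace ℝ (Fin n) ≃ₗᵢ[ℝ] EuclideanSpace ℝ (Fin n))
      = reflH u := funext (reflH_eq_reflection u hu)
  rwa [this] at h

lemma measurableEmbedding_reflH (u : EuclideanSpace ℝ (Fin n)) (hu : ‖u‖ = 1) :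
    MeasurableEmbedding (reflH u) := by
  have h := (Submodule.reflection ((ℝ ∙ u)ᗮ) :
    EuclideanSpace ℝ (Fin n) ≃ₗᵢ[ℝ] EuclideanSpace ℝ (Fin n)).toHomeomorph.measurableEmbedding
  have e : ⇑(Submodule.reflection ((ℝ ∙ u)ᗮ) : EuclideanSpace ℝ (Fin n) ≃ₗᵢ[ℝ] EuclideanSpace ℝ (Fin n))
      = reflH u := funext (reflH_eq_reflection u hu)
  rwa [← e]

lemma continuous_reflH (u : EuclideanSpace ℝ (Fin n)) : Continuous (reflH u) := by
  unfold reflH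
  fun_prop

lemma measurable_inner_right (u : EuclideanSpace ℝ (Fin n)) :
    Measurable fun x : EuclideanSpace ℝ (Fin n) => ⟪x, u⟫ :=
  (continuous_id.inner continuous_const).measurable

lemma measurable_polarization {u : EuclideanSpace ℝ (Fin n)}
    {f : EuclideanSpace ℝ (Fin n) → ℝ} (hf : Measurable f) :
    Measurable (polarization u f) := by
  unfold polarization
  have hs : MeasurableSet {x : EuclideanSpace ℝ (Fin n) | 0 ≤ ⟪x, u⟫} :=
    measurableSet_le measurable_const (measurable_inner_right u)
  have hfR : Measurable fun x => f (reflH u x) := hf.comp (continuous_reflH u).measurable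
  exact Measurable.ite hs (hf.max hfR) (hf.min hfR)

lemma volume_hyperplane (u : EuclideanSpace ℝ (Fin n)) (hu : ‖u‖ = 1) :
    volume {x : EuclideanSpace ℝ (Fin n) | ⟪x, u⟫ = 0} = 0 := by
  have he : {x : EuclideanSpace ℝ (Fin n) | ⟪x, u⟫ = 0} = ((ℝ ∙ u)ᗮ : Set _) := by
    ext x
    rw [SetLike.mem_coe, Submodule.mem_orthogonal_singleton_iff_inner_left]
    exact Iff.rfl
  rw [he]
  apply Measure.addHaar_submodule
  intro h
  have hmem : u ∈ (ℝ ∙ u)ᗮ := by rw [h]; trivial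
  have : ⟪u, u⟫ = (0:ℝ) := Submodule.mem_orthogonal_singleton_iff_inner_right.mp hmem
  rw [real_inner_self_eq_norm_sq, hu] at this
  norm_num at this

lemma polarization_pointwise {q : ℝ} (hq : 1 ≤ q) (u : EuclideanSpace ℝ (Fin n))
    (hu : ‖u‖ = 1) (f g : EuclideanSpace ℝ (Fin n) → ℝ)
    (x : EuclideanSpace ℝ (Fin n)) (hx : 0 ≤ ⟪x, u⟫) :
    |polarization u f x - polarization u g x| ^ q
      + |polarization u f (reflH u x) - polarization u g (reflH u x)| ^ q
    ≤ |f x - g x| ^ q + |f (reflH u x) - g (reflH u x)| ^ q := by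
  rcases hx.lt_or_eq with hc | hc
  · have h1 : ⟪reflH u x, u⟫ < 0 := by rw [inner_reflH u hu]; linarith
    rw [polarization, polarization, polarization, polarization, if_pos hx, if_pos hx,
      if_neg (not_le.mpr h1), if_neg (not_le.mpr h1), reflH_involutive u hu,
      min_comm (f (reflH u x)), min_comm (g (reflH u x))]
    exact pair_abs_rpow hq _ _ _ _
  · have hRx : reflH u x = x := by
      rw [reflH, ← hc]
      simp
    rw [hRx]
    simp only [polarization, if_pos hx, hRx, max_self]
    exact le_rfl

theorem stmt_14 {n : ℕ} (u : EuclideanSpace ℝ (Fin n)) (hu : ‖u‖ = 1)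
    (p : ℝ≥0∞) (hp1 : 1 ≤ p) (hp2 : p ≠ ⊤)
    (f g : EuclideanSpace ℝ (Fin n) → ℝ) (hf : Measurable f) (hg : Measurable g)
    (hfg : MemLp (f - g) p volume) :
    eLpNorm (polarization u f - polarization u g) p volume ≤
      eLpNorm (f - g) p volume := by
  have hp0 : p ≠ 0 := (zero_lt_one.trans_le hp1).ne'
  set q := p.toReal with hqdef
  have hq1 : 1 ≤ q := by
    rw [hqdef, ← ENNReal.toReal_one]
    exact ENNReal.toReal_mono hp2 hp1
  have hq0 : 0 ≤ q := by linarith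
  set R := reflH u with hR
  set φ := polarization u f - polarization u g with hφ
  set h := f - g with hh
  have hφm : Measurable φ := (measurable_polarization hf).sub (measurable_polarization hg)
  have hhm : Measurable h := hf.sub hg
  set F : EuclideanSpace ℝ (Fin n) → ℝ≥0∞ := fun x => (‖φ x‖₊ : ℝ≥0∞) ^ q with hF
  set G : EuclideanSpace ℝ (Fin n) → ℝ≥0∞ := fun x => (‖h x‖₊ : ℝ≥0∞) ^ q with hG
  have hFm : Measurable F := hφm.nnnorm.coe_nnreal_ennreal.pow_const q
  have hGm : Measurable G := hhm.nnnorm.coe_nnreal_ennreal.pow_const q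
  have hmp := measurePreserving_reflH u hu
  have hemb := measurableEmbedding_reflH u hu
  -- sets
  set A : Set (EuclideanSpace ℝ (Fin n)) := {x | 0 < ⟪x, u⟫} with hA
  set A' : Set (EuclideanSpace ℝ (Fin n)) := {x | 0 ≤ ⟪x, u⟫} with hA'
  have hAm : MeasurableSet A := measurableSet_lt measurable_const (measurable_inner_right u)
  have hA'm : MeasurableSet A' := measurableSet_le measurable_const (measurable_inner_right u)
  have hNull : volume {x : EuclideanSpace ℝ (Fin n) | ⟪x, u⟫ = 0} = 0 :=
    volume_hyperplane u hu
  have hAE : A =ᵐ[volume] A' := by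
    rw [MeasureTheory.ae_eq_set]
    constructor
    · refine measure_mono_null ?_ hNull
      intro x hx
      simp only [mem_diff, hA, hA', mem_setOf_eq, not_le] at hx
      exact absurd hx.2 (not_lt.mpr hx.1.le)
    · refine measure_mono_null ?_ hNull
      intro x hx
      simp only [mem_diff, hA, hA', mem_setOf_eq, not_lt] at hx
      exact le_antisymm hx.2 hx.1
  have hpre : R ⁻¹' A'ᶜ = A := by
    ext x
    simp only [mem_preimage, mem_compl_iff, hA, hA', mem_setOf_eq, not_le, hR,
      inner_reflH u hu]
    constructor <;> intro hx <;> linarith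
  -- main lintegral inequality
  have hmain : ∫⁻ x, F x ≤ ∫⁻ x, G x := by
    have splitF : ∫⁻ x, F x = (∫⁻ x in A', F x) + ∫⁻ x in A'ᶜ, F x :=
      (lintegral_add_compl F hA'm).symm
    have splitG : ∫⁻ x, G x = (∫⁻ x in A', G x) + ∫⁻ x in A'ᶜ, G x :=
      (lintegral_add_compl G hA'm).symm
    have compF : ∫⁻ x in A'ᶜ, F x = ∫⁻ x in A', F (R x) := by
      rw [← hmp.setLIntegral_comp_preimage_emb hemb F A'ᶜ, hpre]
      exact setLIntegral_congr hAE
    have compG : ∫⁻ x in A'ᶜ, G x = ∫⁻ x in A', G (R x) := by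
      rw [← hmp.setLIntegral_comp_preimage_emb hemb G A'ᶜ, hpre]
      exact setLIntegral_congr hAE
    rw [splitF, splitG, compF, compG,
      ← lintegral_add_left hFm (fun x => F (R x)),
      ← lintegral_add_left hGm (fun x => G (R x))]
    have hRmeas : Measurable R := (continuous_reflH u).measurable
    refine setLIntegral_mono (hGm.add (hGm.comp hRmeas)) ?_
    intro x hx
    have hx' : 0 ≤ ⟪x, u⟫ := hx
    have conv : ∀ r : ℝ, (‖r‖₊ : ℝ≥0∞) ^ q = ENNReal.ofReal (|r| ^ q) := fun r => by
      rw [← enorm_eq_nnnorm, Real.enorm_eq_ofReal_abs, ← ENNReal.ofReal_rpow_of_nonneg (abs_nonneg r) hq0]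
    have key := polarization_pointwise hq1 u hu f g x hx'
    simp only [hF, hG, conv, hφ, hh, Pi.sub_apply, hR]
    rw [← ENNReal.ofReal_add (Real.rpow_nonneg (abs_nonneg _) q)
        (Real.rpow_nonneg (abs_nonneg _) q),
      ← ENNReal.ofReal_add (Real.rpow_nonneg (abs_nonneg _) q)
        (Real.rpow_nonneg (abs_nonneg _) q)]
    exact ENNReal.ofReal_le_ofReal key
  rw [eLpNorm_eq_lintegral_rpow_enorm_toReal hp0 hp2, eLpNorm_eq_lintegral_rpow_enorm_toReal hp0 hp2]
  exact ENNReal.rpow_le_rpow hmain (by positivity)
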